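/- As λ → 0⁺, ∫_{log λ}^{0} (1 + e^{y})^{−2} (y − log λ)^{−1/2} dy ∼ 2(−log λ)^{1/2}; that is, the ratio of the integral to 2(−log λ)^{1/2} tends to 1 as λ → 0⁺. -/

import Mathlib

open Real Filter intervalIntegral MeasureTheory

-- inverse sqrt equals rpow
lemma aux_sqrt_inv_eq {x : ℝ} (hx : 0 ≤ x) : (Real.sqrt x)⁻¹ = x ^ (-(1/2) : ℝ) := by
  rw [Real.sqrt_eq_rpow, ← Real.rpow_neg hx]

-- integrability of shifted inverse sqrt
lemma aux_ii (L u v : ℝ) (hu : -L ≤ u) (hv : -L ≤ v) :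
    IntervalIntegrable (fun y => (Real.sqrt (y + L))⁻¹) volume u v := by
  have h : IntervalIntegrable (fun y => (y + L) ^ (-(1/2) : ℝ)) volume u v := by
    have := (intervalIntegrable_rpow' (a := u + L) (b := v + L)
      (r := -(1/2)) (by norm_num)).comp_add_right L
    simpa using this
  apply h.congr
  intro y hy
  show (y + L) ^ (-(1/2) : ℝ) = (Real.sqrt (y + L))⁻¹
  have : 0 ≤ y + L := by
    rcases Set.mem_uIoc.1 hy with h | h
    · linarith [h.1, hu]
    · linarith [h.1, hv]
  rw [aux_sqrt_inv_eq this]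

-- value of the integral
lemma aux_val (L u v : ℝ) (hu : -L ≤ u) (huv : u ≤ v) :
    ∫ y in u..v, (Real.sqrt (y + L))⁻¹
      = 2 * Real.sqrt (v + L) - 2 * Real.sqrt (u + L) := by
  have hcongr : ∫ y in u..v, (Real.sqrt (y + L))⁻¹
      = ∫ y in u..v, (y + L) ^ (-(1/2) : ℝ) := by
    apply intervalIntegral.integral_congr
    intro y hy
    rw [Set.uIcc_of_le huv] at hy
    exact aux_sqrt_inv_eq (by linarith [hy.1])
  rw [hcongr, intervalIntegral.integral_comp_add_right (fun x => x ^ (-(1/2):ℝ)) L,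
    integral_rpow (Or.inl (by norm_num))]
  have h1 : 0 ≤ u + L := by linarith
  have h2 : 0 ≤ v + L := by linarith
  rw [Real.sqrt_eq_rpow, Real.sqrt_eq_rpow]
  norm_num
  ring

lemma aux_main :
    Tendsto (fun L : ℝ =>
        (∫ y in (-L)..0, ((1 + Real.exp y) ^ 2)⁻¹ * (Real.sqrt (y + L))⁻¹) /
          (2 * Real.sqrt L)) atTop (nhds 1) := by
  have hlow : Tendsto (fun L : ℝ =>
      1 - 2 * Real.exp (-(L/2)) - 2 * (Real.sqrt (L/2))⁻¹ / (2 * Real.sqrt L))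
      atTop (nhds 1) := by
    have h1 : Tendsto (fun L : ℝ => Real.exp (-(L/2))) atTop (nhds 0) := by
      apply Real.tendsto_exp_atBot.comp
      apply tendsto_neg_atBot_iff.2
      exact tendsto_id.atTop_div_const two_pos
    have h2 : Tendsto (fun L : ℝ => (Real.sqrt (L/2))⁻¹) atTop (nhds 0) := by
      apply Tendsto.congr' (f₁ := fun L : ℝ => (L/2) ^ (-(1/2) : ℝ))
      · filter_upwards [eventually_gt_atTop (0:ℝ)] with L hL
        rw [aux_sqrt_inv_eq (by positivity)]
      · exact (tendsto_rpow_neg_atTop (by norm_num)).comp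
          (tendsto_id.atTop_div_const two_pos)
    have h3 : Tendsto (fun L : ℝ => (2 * Real.sqrt L)⁻¹) atTop (nhds 0) := by
      apply Tendsto.congr' (f₁ := fun L : ℝ => (2:ℝ)⁻¹ * L ^ (-(1/2) : ℝ))
      · filter_upwards [eventually_gt_atTop (0:ℝ)] with L hL
        rw [mul_inv, aux_sqrt_inv_eq hL.le]
      · simpa using (tendsto_rpow_neg_atTop (y := 1/2) (by norm_num)).const_mul (2:ℝ)⁻¹
    have h4 : Tendsto (fun L : ℝ => 2 * (Real.sqrt (L/2))⁻¹ / (2 * Real.sqrt L))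
        atTop (nhds 0) := by
      have heq : (fun L : ℝ => 2 * (Real.sqrt (L/2))⁻¹ / (2 * Real.sqrt L))
          = fun L : ℝ => 2 * ((Real.sqrt (L/2))⁻¹ * (2 * Real.sqrt L)⁻¹) := by
        funext L; ring
      rw [heq]
      simpa using (h2.mul h3).const_mul (2:ℝ)
    have := ((tendsto_const_nhds (x := (1:ℝ)) (f := atTop)).sub (h1.const_mul 2)).sub h4
    simpa using this
  apply tendsto_of_tendsto_of_tendsto_of_le_of_le' hlow tendsto_const_nhds
  · -- lower bound eventually
    filter_upwards [eventually_gt_atTop (0:ℝ)] with L hL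
    set S := Real.sqrt L with hS
    have hSpos : 0 < S := Real.sqrt_pos.2 hL
    have hS2pos : 0 < Real.sqrt (L/2) := Real.sqrt_pos.2 (by linarith)
    -- integrability facts
    have hb1 : IntervalIntegrable (fun y => (Real.sqrt (y + L))⁻¹) volume (-L) 0 :=
      aux_ii L (-L) 0 le_rfl (by linarith)
    have hf : IntervalIntegrable
        (fun y => ((1 + Real.exp y) ^ 2)⁻¹ * (Real.sqrt (y + L))⁻¹) volume (-L) 0 :=
      hb1.continuousOn_mul ((((continuous_const.add Real.continuous_exp).pow 2).inv₀
        (fun x => (pow_pos (add_pos one_pos (Real.exp_pos x)) 2).ne')).continuousOn)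
    have hg : IntervalIntegrable
        (fun y => (1 - 2 * Real.exp y) * (Real.sqrt (y + L))⁻¹) volume (-L) 0 :=
      hb1.continuousOn_mul (by fun_prop)
    have he1 : IntervalIntegrable
        (fun y => Real.exp y * (Real.sqrt (y + L))⁻¹) volume (-L) (-(L/2)) :=
      (aux_ii L (-L) (-(L/2)) le_rfl (by linarith)).continuousOn_mul (by fun_prop)
    have he2 : IntervalIntegrable
        (fun y => Real.exp y * (Real.sqrt (y + L))⁻¹) volume (-(L/2)) 0 :=
      (aux_ii L (-(L/2)) 0 (by linarith) (by linarith)).continuousOn_mul (by fun_prop)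
    -- main integral ≥ ∫ (1 - 2 e^y) * b1
    have step1 : (∫ y in (-L)..0, (1 - 2 * Real.exp y) * (Real.sqrt (y + L))⁻¹)
        ≤ ∫ y in (-L)..0, ((1 + Real.exp y) ^ 2)⁻¹ * (Real.sqrt (y + L))⁻¹ := by
      apply intervalIntegral.integral_mono_on (by linarith) hg hf
      intro y hy
      have hsq : (0:ℝ) ≤ (Real.sqrt (y + L))⁻¹ := by positivity
      apply mul_le_mul_of_nonneg_right _ hsq
      have he : 0 < Real.exp y := Real.exp_pos y
      have hpos : (0:ℝ) < (1 + Real.exp y) ^ 2 := by positivity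
      rw [inv_eq_one_div, le_div_iff₀ hpos]
      nlinarith [sq_nonneg (Real.exp y), mul_pos (mul_pos he he) he]
    -- split ∫ (1 - 2e^y) b1 = ∫ b1 - 2 ∫ e^y b1
    have step2 : (∫ y in (-L)..0, (1 - 2 * Real.exp y) * (Real.sqrt (y + L))⁻¹)
        = 2 * S - 2 * ∫ y in (-L)..0, Real.exp y * (Real.sqrt (y + L))⁻¹ := by
      have : (∫ y in (-L)..0, (1 - 2 * Real.exp y) * (Real.sqrt (y + L))⁻¹)
          = (∫ y in (-L)..0, (Real.sqrt (y + L))⁻¹)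
            - 2 * ∫ y in (-L)..0, Real.exp y * (Real.sqrt (y + L))⁻¹ := by
        rw [← intervalIntegral.integral_const_mul, ← intervalIntegral.integral_sub hb1
          ((he1.trans he2).const_mul 2)]
        congr 1; ext y; ring
      rw [this, aux_val L (-L) 0 le_rfl (by linarith)]
      norm_num [hS]
    -- bound E₀
    have hsplit : (∫ y in (-L)..0, Real.exp y * (Real.sqrt (y + L))⁻¹)
        = (∫ y in (-L)..(-(L/2)), Real.exp y * (Real.sqrt (y + L))⁻¹)
          + ∫ y in (-(L/2))..0, Real.exp y * (Real.sqrt (y + L))⁻¹ :=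
      (intervalIntegral.integral_add_adjacent_intervals he1 he2).symm
    have hE1 : (∫ y in (-L)..(-(L/2)), Real.exp y * (Real.sqrt (y + L))⁻¹)
        ≤ 2 * Real.exp (-(L/2)) * S := by
      have hb : IntervalIntegrable (fun y => Real.exp (-(L/2)) * (Real.sqrt (y + L))⁻¹)
          volume (-L) (-(L/2)) :=
        (aux_ii L (-L) (-(L/2)) le_rfl (by linarith)).continuousOn_mul (by fun_prop)
      have := intervalIntegral.integral_mono_on (by linarith) he1 hb (fun y hy => by
        have : Real.exp y ≤ Real.exp (-(L/2)) := Real.exp_le_exp.2 hy.2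
        have hsq : (0:ℝ) ≤ (Real.sqrt (y + L))⁻¹ := by positivity
        exact mul_le_mul_of_nonneg_right this hsq)
      rw [intervalIntegral.integral_const_mul, aux_val L (-L) (-(L/2)) le_rfl (by linarith)]
        at this
      have hmono : Real.sqrt (-(L/2) + L) ≤ S := Real.sqrt_le_sqrt (by linarith)
      have hexp : 0 < Real.exp (-(L/2)) := Real.exp_pos _
      calc (∫ y in (-L)..(-(L/2)), Real.exp y * (Real.sqrt (y + L))⁻¹)
          ≤ Real.exp (-(L/2)) * (2 * Real.sqrt (-(L/2) + L) - 2 * Real.sqrt (-L + L)) := this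
        _ ≤ 2 * Real.exp (-(L/2)) * S := by
            simp only [neg_add_cancel, Real.sqrt_zero]
            nlinarith
    have hE2 : (∫ y in (-(L/2))..0, Real.exp y * (Real.sqrt (y + L))⁻¹)
        ≤ (Real.sqrt (L/2))⁻¹ := by
      have hb : IntervalIntegrable (fun y => Real.exp y * (Real.sqrt (L/2))⁻¹)
          volume (-(L/2)) 0 := (intervalIntegrable_exp.mul_const _)
      have hmono := intervalIntegral.integral_mono_on (by linarith) he2 hb (fun y hy => by
        have h1 : Real.sqrt (L/2) ≤ Real.sqrt (y + L) := Real.sqrt_le_sqrt (by linarith [hy.1])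
        have : (Real.sqrt (y + L))⁻¹ ≤ (Real.sqrt (L/2))⁻¹ :=
          inv_anti₀ hS2pos h1
        exact mul_le_mul_of_nonneg_left this (Real.exp_pos y).le)
      rw [intervalIntegral.integral_mul_const, integral_exp] at hmono
      calc (∫ y in (-(L/2))..0, Real.exp y * (Real.sqrt (y + L))⁻¹)
          ≤ (Real.exp 0 - Real.exp (-(L/2))) * (Real.sqrt (L/2))⁻¹ := hmono
        _ ≤ (Real.sqrt (L/2))⁻¹ := by
            have := (Real.exp_pos (-(L/2))).le
            have h0 : Real.exp 0 = 1 := Real.exp_zero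
            nlinarith [inv_pos.2 hS2pos]
    -- combine
    rw [le_div_iff₀ (by positivity)]
    have hSS : S * S = L := Real.mul_self_sqrt hL.le
    have key : (∫ y in (-L)..0, Real.exp y * (Real.sqrt (y + L))⁻¹)
        ≤ 2 * Real.exp (-(L/2)) * S + (Real.sqrt (L/2))⁻¹ := by
      rw [hsplit]; linarith
    have hSinv : 2 * (Real.sqrt (L/2))⁻¹ / (2 * S) * (2 * S) = 2 * (Real.sqrt (L/2))⁻¹ :=
      div_mul_cancel₀ _ (by positivity)
    calc (1 - 2 * Real.exp (-(L/2)) - 2 * (Real.sqrt (L/2))⁻¹ / (2 * S)) * (2 * S)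
        = 2 * S - 4 * Real.exp (-(L/2)) * S
          - 2 * (Real.sqrt (L/2))⁻¹ / (2 * S) * (2 * S) := by ring
      _ = 2 * S - 4 * Real.exp (-(L/2)) * S - 2 * (Real.sqrt (L/2))⁻¹ := by rw [hSinv]
      _ ≤ 2 * S - 2 * (∫ y in (-L)..0, Real.exp y * (Real.sqrt (y + L))⁻¹) := by linarith
      _ = ∫ y in (-L)..0, (1 - 2 * Real.exp y) * (Real.sqrt (y + L))⁻¹ := step2.symm
      _ ≤ _ := step1
  · -- upper bound eventually
    filter_upwards [eventually_gt_atTop (0:ℝ)] with L hL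
    have hSpos : 0 < Real.sqrt L := Real.sqrt_pos.2 hL
    rw [div_le_one (by positivity)]
    have hb1 : IntervalIntegrable (fun y => (Real.sqrt (y + L))⁻¹) volume (-L) 0 :=
      aux_ii L (-L) 0 le_rfl (by linarith)
    have hf : IntervalIntegrable
        (fun y => ((1 + Real.exp y) ^ 2)⁻¹ * (Real.sqrt (y + L))⁻¹) volume (-L) 0 :=
      hb1.continuousOn_mul ((((continuous_const.add Real.continuous_exp).pow 2).inv₀
        (fun x => (pow_pos (add_pos one_pos (Real.exp_pos x)) 2).ne')).continuousOn)
    have hmono := intervalIntegral.integral_mono_on (by linarith) hf hb1 (fun y hy => by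
      have hsq : (0:ℝ) ≤ (Real.sqrt (y + L))⁻¹ := by positivity
      have he : 0 < Real.exp y := Real.exp_pos y
      have h1 : ((1 + Real.exp y) ^ 2)⁻¹ ≤ 1 := by
        rw [inv_le_one_iff₀]; right; nlinarith
      nlinarith)
    rw [aux_val L (-L) 0 le_rfl (by linarith)] at hmono
    simpa using hmono

/-- As `λ → 0⁺`,
`∫_{log λ}^{0} (1 + e^y)⁻² (y − log λ)^{-1/2} dy ∼ 2 (−log λ)^{1/2}`. -/
theorem stmt_7 :
    Tendsto (fun lam : ℝ =>
        (∫ y in (Real.log lam)..0,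
            ((1 + Real.exp y) ^ 2)⁻¹ * (Real.sqrt (y - Real.log lam))⁻¹) /
          (2 * Real.sqrt (-Real.log lam)))
      (nhdsWithin 0 (Set.Ioi 0)) (nhds 1) := by
  have hlog : Tendsto (fun lam : ℝ => -Real.log lam) (nhdsWithin 0 (Set.Ioi 0)) atTop :=
    tendsto_neg_atTop_iff.2 Real.tendsto_log_nhdsGT_zero
  have := aux_main.comp hlog
  simpa only [Function.comp_def, neg_neg, ← sub_eq_add_neg] using this
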